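/- Let $d \geq 0$, $k = 2$, and $A \subseteq \{0,1\}^d \subset \mathbb{Z}^d$. Then the additive energy $E(A)$, the number of quadruples $(a_1,a_2,a_3,a_4) \in A^4$ with $a_1 + a_2 = a_3 + a_4$, satisfies $E(A) \leq |A|^{\log_2 6}$. -/

import Mathlib

open Finset Real


-- (★★)
lemma starstar {p r : ℝ} (hp : 2 < p) (hr : 1 ≤ r) :
    (p-1) * r ^ (p-2) ≤ (p-2) * r ^ (p-1) + 1 := by
  have hp2 : (0:ℝ) < p - 2 := by linarith
  set w := r ^ (p-2) with hw
  have hw1 : 1 ≤ w := Real.one_le_rpow hr hp2.le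
  have hα : 1 ≤ (p-1)/(p-2) := by
    rw [le_div_iff₀ hp2]; linarith
  have hb := one_add_mul_self_le_rpow_one_add (s := w - 1) (by linarith) hα
  have hwα : (1 + (w - 1)) ^ ((p-1)/(p-2)) = r ^ (p-1) := by
    rw [show 1 + (w-1) = w by ring, hw, ← Real.rpow_mul (by linarith)]
    congr 1
    field_simp
  rw [hwα] at hb
  have := mul_le_mul_of_nonneg_left hb hp2.le
  have he : (p-2) * ((p-1)/(p-2)) = p - 1 := by field_simp
  nlinarith [this]

-- (★)
lemma star {p r : ℝ} (hp : 2 < p) (hr : 1 ≤ r) :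
    r ^ p - 1 ≤ (r - 1) * (r + 1) ^ (p-1) := by
  have hr0 : (0:ℝ) < r := by linarith
  have hb := one_add_mul_self_le_rpow_one_add (s := 1/r)
    (le_trans (by norm_num) (by positivity : (0:ℝ) ≤ 1/r)) (by linarith : (1:ℝ) ≤ p - 1)
  have hsplit : (r + 1) ^ (p-1) = r ^ (p-1) * (1 + 1/r) ^ (p-1) := by
    rw [← Real.mul_rpow hr0.le (by positivity)]
    congr 1; field_simp
  have h1 : r ^ (p-1) * (1 + (p-1) * (1/r)) ≤ (r+1)^(p-1) := by
    rw [hsplit]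
    exact mul_le_mul_of_nonneg_left hb (by positivity)
  have h2 : (r - 1) * (r ^ (p-1) * (1 + (p-1)*(1/r))) ≤ (r-1) * (r+1)^(p-1) :=
    mul_le_mul_of_nonneg_left h1 (by linarith)
  have e1 : r ^ (p-1) * (1/r) = r ^ (p-2) := by
    rw [show p-2 = (p-1)-1 by ring, Real.rpow_sub_one hr0.ne' (p-1)]; ring
  have e2 : r ^ (p-1) * r = r ^ p := by
    rw [← Real.rpow_add_one hr0.ne' (p-1)]; congr 1; ring
  have e3 : r ^ (p-2) * r = r ^ (p-1) := by
    rw [← Real.rpow_add_one hr0.ne' (p-2)]; congr 1; ring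
  have key : (r-1) * (r^(p-1) * (1 + (p-1)*(1/r)))
      = r^p - r^(p-1) + (p-1)*(r^(p-1) - r^(p-2)) := by
    rw [show r^(p-1) * (1 + (p-1)*(1/r)) = r^(p-1) + (p-1)*(r^(p-1)*(1/r)) by ring, e1]
    linear_combination e2 + (p-1) * e3
  rw [key] at h2
  have hss := starstar hp hr
  linarith


noncomputable def phiKT (p : ℝ) : ℝ → ℝ := fun s => (s + s⁻¹) ^ p - s ^ p - (s⁻¹) ^ p

lemma phiKT_hasDeriv {p s : ℝ} (hs : 0 < s) :
    HasDerivAt (phiKT p)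
      ((1 + -(s^2)⁻¹) * p * (s + s⁻¹) ^ (p-1) - p * s ^ (p-1)
        - (-(s^2)⁻¹ * p * (s⁻¹) ^ (p-1))) s := by
  have hne : s ≠ 0 := hs.ne'
  have hbase : (0:ℝ) < s + s⁻¹ := by positivity
  have h1 : HasDerivAt (fun s : ℝ => s + s⁻¹) (1 + -(s^2)⁻¹) s :=
    (hasDerivAt_id s).add (hasDerivAt_inv hne)
  have H := ((h1.rpow_const (p := p) (Or.inl hbase.ne')).sub
      ((hasDerivAt_id s).rpow_const (p := p) (Or.inl hne))).sub
    ((hasDerivAt_inv hne).rpow_const (p := p) (Or.inl (inv_ne_zero hne)))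
  exact H.congr_deriv (by simp only [id_eq]; ring)

lemma phiKT_deriv_nonneg {p s : ℝ} (hp : 2 < p) (hs : 1 ≤ s) :
    0 ≤ (1 + -(s^2)⁻¹) * p * (s + s⁻¹) ^ (p-1) - p * s ^ (p-1)
        - (-(s^2)⁻¹ * p * (s⁻¹) ^ (p-1)) := by
  have hs0 : (0:ℝ) < s := by linarith
  have hp0 : (0:ℝ) < p := by linarith
  have hr1 : (1:ℝ) ≤ s^2 := by nlinarith
  set B : ℝ := (1 - (s^2)⁻¹) * (s + s⁻¹) ^ (p-1) - s ^ (p-1) + (s^2)⁻¹ * (s⁻¹) ^ (p-1)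
    with hB
  have hsp : (0:ℝ) < s ^ (p+1) := Real.rpow_pos_of_pos hs0 _
  have hs2r : (s:ℝ)^2 = s ^ (2:ℝ) := by
    rw [← Real.rpow_natCast s 2]; norm_num
  have h1 : (s + s⁻¹) ^ (p-1) * s ^ (p-1) = (s^2+1) ^ (p-1) := by
    rw [← Real.mul_rpow (by positivity) hs0.le]
    congr 1; field_simp
  have h2 : s ^ (p-1) * s ^ (p+1) = (s^2) ^ p := by
    rw [← Real.rpow_add hs0, hs2r, ← Real.rpow_mul hs0.le]
    congr 1; ring
  have h3 : (s^2)⁻¹ * (s⁻¹) ^ (p-1) * s ^ (p+1) = 1 := by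
    have e : (s^2)⁻¹ = (s⁻¹) ^ ((2:ℕ):ℝ) := by
      rw [Real.rpow_natCast, inv_pow]
    rw [e, ← Real.rpow_add (by positivity), Real.inv_rpow hs0.le,
      show ((2:ℕ):ℝ) + (p-1) = p+1 by push_cast; ring]
    exact inv_mul_cancel₀ hsp.ne' 
  have h4 : s ^ (p+1) = s ^ (p-1) * s^2 := by
    rw [hs2r, ← Real.rpow_add hs0]; congr 1; ring
  have hE : B * s ^ (p+1) = (s^2 - 1) * (s^2+1) ^ (p-1) - (s^2) ^ p + 1 := by
    rw [hB]
    have expand : ((1 - (s^2)⁻¹) * (s + s⁻¹) ^ (p-1) - s ^ (p-1) + (s^2)⁻¹ * (s⁻¹) ^ (p-1))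
          * s ^ (p+1)
        = (1 - (s^2)⁻¹) * s^2 * ((s + s⁻¹) ^ (p-1) * s ^ (p-1))
          - s ^ (p-1) * s ^ (p+1) + (s^2)⁻¹ * (s⁻¹) ^ (p-1) * s ^ (p+1) := by
      rw [h4]; ring
    rw [expand, h1, h2, h3]
    have : (1 - (s^2)⁻¹) * s^2 = s^2 - 1 := by field_simp
    rw [this]
  have hstar := star hp hr1
  have hBpos : 0 ≤ B := by nlinarith [hE, hstar, hsp]
  have : (1 + -(s^2)⁻¹) * p * (s + s⁻¹) ^ (p-1) - p * s ^ (p-1)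
        - (-(s^2)⁻¹ * p * (s⁻¹) ^ (p-1)) = p * B := by rw [hB]; ring
  rw [this]
  positivity

lemma phiKT_ge {p : ℝ} (hp : 2 < p) {s : ℝ} (hs : 1 ≤ s) :
    (2:ℝ) ^ p - 2 ≤ phiKT p s := by
  have hmono : MonotoneOn (phiKT p) (Set.Ici 1) := by
    apply monotoneOn_of_deriv_nonneg (convex_Ici 1)
    · intro x hx
      have hx0 : (0:ℝ) < x := lt_of_lt_of_le one_pos hx
      exact (phiKT_hasDeriv (p := p) hx0).continuousAt.continuousWithinAt
    · rw [interior_Ici]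
      intro x hx
      have hx0 : (0:ℝ) < x := lt_trans one_pos hx
      exact (phiKT_hasDeriv (p := p) hx0).differentiableAt.differentiableWithinAt
    · rw [interior_Ici]
      intro x hx
      have hx1 : (1:ℝ) ≤ x := le_of_lt hx
      rw [(phiKT_hasDeriv (p := p) (lt_of_lt_of_le one_pos hx1)).deriv]
      exact phiKT_deriv_nonneg hp hx1
  have h1 : phiKT p 1 = 2 ^ p - 2 := by
    simp [phiKT, Real.one_rpow]
    ring_nf
  have := hmono (Set.mem_Ici.mpr le_rfl) hs hs
  rw [h1] at this
  exact this

lemma ktK1 {p : ℝ} (hp : 2 < p) {r : ℝ} (hr : 1 ≤ r) :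
    r ^ p + 1 + ((2:ℝ)^p - 2) * r ^ (p/2) ≤ (r + 1) ^ p := by
  have hr0 : (0:ℝ) < r := by linarith
  set s := Real.sqrt r with hsdef
  have hs1 : 1 ≤ s := by
    rw [hsdef, show (1:ℝ) = Real.sqrt 1 by simp]
    exact Real.sqrt_le_sqrt hr
  have hs0 : (0:ℝ) < s := by linarith
  have hs2 : s ^ 2 = r := Real.sq_sqrt hr0.le
  have hsp : (0:ℝ) < s ^ p := Real.rpow_pos_of_pos hs0 _
  have hphi := phiKT_ge hp hs1
  have hmul := mul_le_mul_of_nonneg_right hphi hsp.le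
  have a1 : (s + s⁻¹) ^ p * s ^ p = (r+1) ^ p := by
    rw [← Real.mul_rpow (by positivity) hs0.le]
    congr 1
    field_simp
    linear_combination hs2
  have a2 : s ^ p * s ^ p = r ^ p := by
    rw [← Real.mul_rpow hs0.le hs0.le, ← hs2]; congr 1; ring
  have a3 : (s⁻¹) ^ p * s ^ p = 1 := by
    rw [← Real.mul_rpow (by positivity) hs0.le, inv_mul_cancel₀ hs0.ne', Real.one_rpow]
  have a4 : s ^ p = r ^ (p/2) := by
    rw [← hs2, ← Real.rpow_natCast s 2, ← Real.rpow_mul hs0.le]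
    congr 1
    push_cast; ring
  rw [phiKT] at hmul
  have expand : ((s + s⁻¹) ^ p - s ^ p - (s⁻¹) ^ p) * s ^ p
      = (s + s⁻¹) ^ p * s ^ p - s ^ p * s ^ p - (s⁻¹) ^ p * s ^ p := by ring
  rw [expand, a1, a2, a3] at hmul
  rw [a4] at hmul
  linarith

lemma ktMain {p : ℝ} (hp : 2 < p) {x y : ℝ} (hx : 0 ≤ x) (hy : 0 ≤ y) :
    x ^ p + y ^ p + ((2:ℝ)^p - 2) * (x*y) ^ (p/2) ≤ (x + y) ^ p := by
  have hp0 : p ≠ 0 := by linarith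
  have hp2 : p/2 ≠ 0 := by
    have : (0:ℝ) < p/2 := by linarith
    exact this.ne'
  -- helper for the case 0 < y ≤ x
  have key : ∀ x y : ℝ, 0 < y → y ≤ x →
      x ^ p + y ^ p + ((2:ℝ)^p - 2) * (x*y) ^ (p/2) ≤ (x + y) ^ p := by
    intro x y hy0 hyx
    have hx0 : (0:ℝ) < x := lt_of_lt_of_le hy0 hyx
    have hr1 : (1:ℝ) ≤ x / y := (one_le_div hy0).mpr hyx
    have hyp : (0:ℝ) < y ^ p := Real.rpow_pos_of_pos hy0 _
    have h := mul_le_mul_of_nonneg_right (ktK1 hp hr1) hyp.le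
    have b1 : (x/y + 1) ^ p * y ^ p = (x + y) ^ p := by
      rw [← Real.mul_rpow (by positivity) hy0.le]
      congr 1; field_simp
    have b2 : (x/y) ^ p * y ^ p = x ^ p := by
      rw [← Real.mul_rpow (by positivity) hy0.le]
      congr 1; field_simp
    have b3 : (x/y) ^ (p/2) * y ^ p = (x*y) ^ (p/2) := by
      have : y ^ p = (y^2) ^ (p/2) := by
        rw [← Real.rpow_natCast y 2, ← Real.rpow_mul hy0.le]
        congr 1; push_cast; ring
      rw [this, ← Real.mul_rpow (by positivity) (by positivity)]
      congr 1; field_simp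
    calc x ^ p + y ^ p + ((2:ℝ)^p - 2) * (x*y) ^ (p/2)
        = ((x/y) ^ p + 1 + ((2:ℝ)^p - 2) * (x/y) ^ (p/2)) * y ^ p := by
          rw [add_mul, add_mul, one_mul, mul_assoc, b3, b2]
      _ ≤ (x/y + 1) ^ p * y ^ p := h
      _ = (x + y) ^ p := b1
  rcases eq_or_lt_of_le hx with hx0 | hx0
  · rw [← hx0]
    simp [Real.zero_rpow hp0, Real.zero_rpow hp2]
  rcases eq_or_lt_of_le hy with hy0 | hy0
  · rw [← hy0]
    simp [Real.zero_rpow hp0, Real.zero_rpow hp2]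
  rcases le_total y x with hyx | hxy
  · exact key x y hy0 hyx
  · have := key y x hx0 hxy
    rw [mul_comm y x, add_comm y x] at this
    linarith


variable {G : Type*} [AddCommGroup G] [DecidableEq G]

def quadE (P Q R T : Finset G) : ℕ :=
  (((P ×ˢ Q) ×ˢ (R ×ˢ T)).filter (fun p => p.1.1 + p.1.2 = p.2.1 + p.2.2)).card

lemma quadE_swap_fst (P Q R T : Finset G) : quadE P Q R T = quadE Q P R T := by
  unfold quadE
  apply Finset.card_nbij' (fun x => ((x.1.2, x.1.1), x.2)) (fun x => ((x.1.2, x.1.1), x.2))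
  · intro x hx; obtain ⟨⟨a, b⟩, c, e⟩ := x
    simp only [Finset.mem_coe, mem_filter, mem_product] at hx ⊢
    exact ⟨⟨⟨hx.1.1.2, hx.1.1.1⟩, hx.1.2⟩, by rw [add_comm]; exact hx.2⟩
  · intro x hx; obtain ⟨⟨a, b⟩, c, e⟩ := x
    simp only [Finset.mem_coe, mem_filter, mem_product] at hx ⊢
    exact ⟨⟨⟨hx.1.1.2, hx.1.1.1⟩, hx.1.2⟩, by rw [add_comm]; exact hx.2⟩
  · rintro ⟨⟨a, b⟩, c, e⟩ _; rfl
  · rintro ⟨⟨a, b⟩, c, e⟩ _; rfl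

lemma quadE_swap_snd (P Q R T : Finset G) : quadE P Q R T = quadE P Q T R := by
  unfold quadE
  apply Finset.card_nbij' (fun x => (x.1, (x.2.2, x.2.1))) (fun x => (x.1, (x.2.2, x.2.1)))
  · intro x hx; obtain ⟨⟨a, b⟩, c, e⟩ := x
    simp only [Finset.mem_coe, mem_filter, mem_product] at hx ⊢
    exact ⟨⟨hx.1.1, ⟨hx.1.2.2, hx.1.2.1⟩⟩, by rw [hx.2, add_comm]⟩
  · intro x hx; obtain ⟨⟨a, b⟩, c, e⟩ := x
    simp only [Finset.mem_coe, mem_filter, mem_product] at hx ⊢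
    exact ⟨⟨hx.1.1, ⟨hx.1.2.2, hx.1.2.1⟩⟩, by rw [hx.2, add_comm]⟩
  · rintro ⟨⟨a, b⟩, c, e⟩ _; rfl
  · rintro ⟨⟨a, b⟩, c, e⟩ _; rfl

def rcnt (X Y : Finset G) (t : G) : ℕ :=
  ((X ×ˢ Y).filter (fun p => p.1 - p.2 = t)).card

lemma quadE_eq_sum (X Y U : Finset G)
    (hU : ∀ a ∈ X, ∀ c ∈ X, a - c ∈ U) :
    quadE X Y X Y = ∑ t ∈ U, rcnt X X t * rcnt Y Y t := by
  unfold quadE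
  rw [Finset.card_eq_sum_card_fiberwise
    (f := fun q : (G × G) × (G × G) => q.1.1 - q.2.1) (t := U) ?_]
  · apply Finset.sum_congr rfl
    intro t _
    rw [Finset.filter_filter]
    unfold rcnt
    rw [← Finset.card_product]
    apply Finset.card_nbij' (fun q => ((q.1.1, q.2.1), (q.2.2, q.1.2)))
      (fun q => ((q.1.1, q.2.2), (q.1.2, q.2.1)))
    · intro x hx; obtain ⟨⟨a, b⟩, c, e⟩ := x
      simp only [Finset.mem_coe, mem_filter, mem_product] at hx ⊢
      obtain ⟨⟨⟨ha, hb⟩, hc, he⟩, hsum, hdiff⟩ := hx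
      exact ⟨⟨⟨ha, hc⟩, hdiff⟩, ⟨⟨he, hb⟩, by rw [← hdiff, sub_eq_sub_iff_add_eq_add, hsum]; exact add_comm e c⟩⟩
    · intro x hx; obtain ⟨⟨a, c⟩, e, b⟩ := x
      simp only [Finset.mem_coe, mem_filter, mem_product] at hx ⊢
      obtain ⟨⟨⟨ha, hc⟩, hd1⟩, ⟨he, hb⟩, hd2⟩ := hx
      exact ⟨⟨⟨ha, hb⟩, hc, he⟩, ((sub_eq_sub_iff_add_eq_add).mp (hd1.trans hd2.symm)).trans (add_comm e c), hd1⟩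
    · rintro ⟨⟨a, b⟩, c, e⟩ _; rfl
    · rintro ⟨⟨a, c⟩, e, b⟩ _; rfl
  · intro x hx; obtain ⟨⟨a, b⟩, c, e⟩ := x
    simp only [Finset.mem_coe, mem_filter, mem_product] at hx
    exact hU a hx.1.1.1 c hx.1.2.1

lemma quadE_sq_le (X Y : Finset G) :
    (quadE X Y X Y) ^ 2 ≤ quadE X X X X * quadE Y Y Y Y := by
  set U : Finset G := ((X ×ˢ X).image (fun p => p.1 - p.2))
    ∪ ((Y ×ˢ Y).image (fun p => p.1 - p.2)) with hUdef
  have hUX : ∀ a ∈ X, ∀ c ∈ X, a - c ∈ U := by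
    intro a ha c hc
    exact Finset.mem_union_left _ (Finset.mem_image.mpr ⟨(a, c), Finset.mk_mem_product ha hc, rfl⟩)
  have hUY : ∀ a ∈ Y, ∀ c ∈ Y, a - c ∈ U := by
    intro a ha c hc
    exact Finset.mem_union_right _ (Finset.mem_image.mpr ⟨(a, c), Finset.mk_mem_product ha hc, rfl⟩)
  rw [quadE_eq_sum X Y U hUX, quadE_eq_sum X X U hUX, quadE_eq_sum Y Y U hUY]
  have := Finset.sum_mul_sq_le_sq_mul_sq (R := ℕ) U (fun t => rcnt X X t) (fun t => rcnt Y Y t)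
  simpa [sq] using this


lemma quadE_decomp (A : Finset G) (φ : G →+ ℤ) (hA : ∀ v ∈ A, φ v = 0 ∨ φ v = 1) :
    quadE A A A A ≤ quadE (A.filter (fun v => φ v = 0)) (A.filter (fun v => φ v = 0))
        (A.filter (fun v => φ v = 0)) (A.filter (fun v => φ v = 0))
      + quadE (A.filter (fun v => φ v = 1)) (A.filter (fun v => φ v = 1))
        (A.filter (fun v => φ v = 1)) (A.filter (fun v => φ v = 1))
      + 4 * quadE (A.filter (fun v => φ v = 0)) (A.filter (fun v => φ v = 1))
        (A.filter (fun v => φ v = 0)) (A.filter (fun v => φ v = 1)) := by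
  set A0 := A.filter (fun v => φ v = 0) with hA0
  set A1 := A.filter (fun v => φ v = 1) with hA1
  have hsub : ((A ×ˢ A) ×ˢ (A ×ˢ A)).filter
        (fun p => p.1.1 + p.1.2 = p.2.1 + p.2.2)
      ⊆ ((((A0 ×ˢ A0) ×ˢ (A0 ×ˢ A0)).filter (fun p => p.1.1 + p.1.2 = p.2.1 + p.2.2)
          ∪ ((A1 ×ˢ A1) ×ˢ (A1 ×ˢ A1)).filter (fun p => p.1.1 + p.1.2 = p.2.1 + p.2.2))
        ∪ ((((A0 ×ˢ A1) ×ˢ (A0 ×ˢ A1)).filter (fun p => p.1.1 + p.1.2 = p.2.1 + p.2.2)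
            ∪ ((A0 ×ˢ A1) ×ˢ (A1 ×ˢ A0)).filter (fun p => p.1.1 + p.1.2 = p.2.1 + p.2.2))
          ∪ (((A1 ×ˢ A0) ×ˢ (A0 ×ˢ A1)).filter (fun p => p.1.1 + p.1.2 = p.2.1 + p.2.2)
            ∪ ((A1 ×ˢ A0) ×ˢ (A1 ×ˢ A0)).filter (fun p => p.1.1 + p.1.2 = p.2.1 + p.2.2)))) := by
    rintro ⟨⟨a, b⟩, c, e⟩ hx
    simp only [Finset.mem_filter, Finset.mem_product] at hx
    obtain ⟨⟨⟨ha, hb⟩, hc, he⟩, hsum⟩ := hx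
    have heq : φ a + φ b = φ c + φ e := by rw [← map_add, ← map_add, hsum]
    simp only [hA0, hA1, Finset.mem_union, Finset.mem_filter, Finset.mem_product]
    rcases hA a ha with h1 | h1 <;> rcases hA b hb with h2 | h2 <;>
      rcases hA c hc with h3 | h3 <;> rcases hA e he with h4 | h4 <;>
      first
        | (exfalso; omega)
        | exact Or.inl (Or.inl ⟨⟨⟨⟨ha, h1⟩, ⟨hb, h2⟩⟩, ⟨⟨hc, h3⟩, ⟨he, h4⟩⟩⟩, hsum⟩)
        | exact Or.inl (Or.inr ⟨⟨⟨⟨ha, h1⟩, ⟨hb, h2⟩⟩, ⟨⟨hc, h3⟩, ⟨he, h4⟩⟩⟩, hsum⟩)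
        | exact Or.inr (Or.inl (Or.inl ⟨⟨⟨⟨ha, h1⟩, ⟨hb, h2⟩⟩, ⟨⟨hc, h3⟩, ⟨he, h4⟩⟩⟩, hsum⟩))
        | exact Or.inr (Or.inl (Or.inr ⟨⟨⟨⟨ha, h1⟩, ⟨hb, h2⟩⟩, ⟨⟨hc, h3⟩, ⟨he, h4⟩⟩⟩, hsum⟩))
        | exact Or.inr (Or.inr (Or.inl ⟨⟨⟨⟨ha, h1⟩, ⟨hb, h2⟩⟩, ⟨⟨hc, h3⟩, ⟨he, h4⟩⟩⟩, hsum⟩))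
        | exact Or.inr (Or.inr (Or.inr ⟨⟨⟨⟨ha, h1⟩, ⟨hb, h2⟩⟩, ⟨⟨hc, h3⟩, ⟨he, h4⟩⟩⟩, hsum⟩))
  have hcard := Finset.card_le_card hsub
  have l0 := Finset.card_union_le
    ((((A0 ×ˢ A0) ×ˢ (A0 ×ˢ A0)).filter (fun p => p.1.1 + p.1.2 = p.2.1 + p.2.2))
      ∪ (((A1 ×ˢ A1) ×ˢ (A1 ×ˢ A1)).filter (fun p => p.1.1 + p.1.2 = p.2.1 + p.2.2)))
    (((((A0 ×ˢ A1) ×ˢ (A0 ×ˢ A1)).filter (fun p => p.1.1 + p.1.2 = p.2.1 + p.2.2))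
        ∪ (((A0 ×ˢ A1) ×ˢ (A1 ×ˢ A0)).filter (fun p => p.1.1 + p.1.2 = p.2.1 + p.2.2)))
      ∪ ((((A1 ×ˢ A0) ×ˢ (A0 ×ˢ A1)).filter (fun p => p.1.1 + p.1.2 = p.2.1 + p.2.2))
        ∪ (((A1 ×ˢ A0) ×ˢ (A1 ×ˢ A0)).filter (fun p => p.1.1 + p.1.2 = p.2.1 + p.2.2))))
  have l1 := Finset.card_union_le
    ((((A0 ×ˢ A0) ×ˢ (A0 ×ˢ A0)).filter (fun p => p.1.1 + p.1.2 = p.2.1 + p.2.2)))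
    ((((A1 ×ˢ A1) ×ˢ (A1 ×ˢ A1)).filter (fun p => p.1.1 + p.1.2 = p.2.1 + p.2.2)))
  have l2 := Finset.card_union_le
    (((((A0 ×ˢ A1) ×ˢ (A0 ×ˢ A1)).filter (fun p => p.1.1 + p.1.2 = p.2.1 + p.2.2))
        ∪ (((A0 ×ˢ A1) ×ˢ (A1 ×ˢ A0)).filter (fun p => p.1.1 + p.1.2 = p.2.1 + p.2.2))))
    (((((A1 ×ˢ A0) ×ˢ (A0 ×ˢ A1)).filter (fun p => p.1.1 + p.1.2 = p.2.1 + p.2.2))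
        ∪ (((A1 ×ˢ A0) ×ˢ (A1 ×ˢ A0)).filter (fun p => p.1.1 + p.1.2 = p.2.1 + p.2.2))))
  have l3 := Finset.card_union_le
    ((((A0 ×ˢ A1) ×ˢ (A0 ×ˢ A1)).filter (fun p => p.1.1 + p.1.2 = p.2.1 + p.2.2)))
    ((((A0 ×ˢ A1) ×ˢ (A1 ×ˢ A0)).filter (fun p => p.1.1 + p.1.2 = p.2.1 + p.2.2)))
  have l4 := Finset.card_union_le
    ((((A1 ×ˢ A0) ×ˢ (A0 ×ˢ A1)).filter (fun p => p.1.1 + p.1.2 = p.2.1 + p.2.2)))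
    ((((A1 ×ˢ A0) ×ˢ (A1 ×ˢ A0)).filter (fun p => p.1.1 + p.1.2 = p.2.1 + p.2.2)))
  have e1 : quadE A0 A1 A1 A0 = quadE A0 A1 A0 A1 := quadE_swap_snd _ _ _ _
  have e2 : quadE A1 A0 A0 A1 = quadE A0 A1 A0 A1 := quadE_swap_fst _ _ _ _
  have e3 : quadE A1 A0 A1 A0 = quadE A0 A1 A0 A1 :=
    (quadE_swap_fst _ _ _ _).trans (quadE_swap_snd _ _ _ _)
  unfold quadE at e1 e2 e3 ⊢
  omega

lemma logb26_facts : (2:ℝ) < Real.logb 2 6 ∧ Real.logb 2 6 < 3 ∧ (2:ℝ) ^ (Real.logb 2 6) = 6 := by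
  have h6 : (2:ℝ) ^ (Real.logb 2 6) = 6 :=
    Real.rpow_logb (by norm_num) (by norm_num) (by norm_num)
  have h4 : (2:ℝ) ^ (2:ℝ) = 4 := by norm_num
  have h8 : (2:ℝ) ^ (3:ℝ) = 8 := by norm_num
  refine ⟨?_, ?_, h6⟩
  · exact (Real.lt_logb_iff_rpow_lt (by norm_num : (1:ℝ) < 2) (by norm_num : (0:ℝ) < 6)).mpr
      (by rw [h4]; norm_num)
  · exact (Real.logb_lt_iff_lt_rpow (by norm_num : (1:ℝ) < 2) (by norm_num : (0:ℝ) < 6)).mpr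
      (by rw [h8]; norm_num)

lemma kt_induction {d : ℕ} (S : Finset (Fin d)) :
    ∀ A : Finset (Fin d → ℤ), (∀ v ∈ A, ∀ i, v i = 0 ∨ v i = 1) →
      (∀ v ∈ A, ∀ w ∈ A, ∀ j, j ∉ S → v j = w j) →
      (quadE A A A A : ℝ) ≤ (A.card : ℝ) ^ (Real.logb 2 6) := by
  obtain ⟨hp2, hp3, h26⟩ := logb26_facts
  set p := Real.logb 2 6 with hpdef
  induction S using Finset.induction_on with
  | empty =>
    intro A hA hagree
    have hcard : A.card ≤ 1 := by
      rw [Finset.card_le_one]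
      intro v hv w hw
      funext j
      exact hagree v hv w hw j (by simp)
    have hq : quadE A A A A ≤ A.card ^ 4 := by
      calc quadE A A A A ≤ ((A ×ˢ A) ×ˢ (A ×ˢ A)).card := Finset.card_filter_le _ _
        _ = A.card ^ 4 := by simp [Finset.card_product]; ring
    interval_cases h : A.card
    · have : quadE A A A A = 0 := by omega
      rw [this]
      simp [Real.zero_rpow (by positivity : (0:ℝ) < p).ne']
    · have : quadE A A A A ≤ 1 := by omega
      calc (quadE A A A A : ℝ) ≤ 1 := by exact_mod_cast this
        _ = (1:ℝ) ^ p := (Real.one_rpow p).symm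
        _ = ((1:ℕ):ℝ) ^ p := by norm_num
  | @insert j S' hj ih =>
    intro A hA hagree
    set φ : (Fin d → ℤ) →+ ℤ := Pi.evalAddMonoidHom (fun _ : Fin d => ℤ) j with hφ
    have hφv : ∀ v : Fin d → ℤ, φ v = v j := fun _ => rfl
    set A0 := A.filter (fun v => φ v = 0) with hA0
    set A1 := A.filter (fun v => φ v = 1) with hA1
    have hA0sub : A0 ⊆ A := Finset.filter_subset _ _
    have hA1sub : A1 ⊆ A := Finset.filter_subset _ _
    have hAv : ∀ v ∈ A, φ v = 0 ∨ φ v = 1 := fun v hv => by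
      rw [hφv]; exact hA v hv j
    -- cardinalities
    have hcards : A0.card + A1.card = A.card := by
      rw [hA0, hA1]
      have : A.filter (fun v => φ v = 1) = A.filter (fun v => ¬ (φ v = 0)) := by
        apply Finset.filter_congr
        intro v hv
        rcases hAv v hv with h | h <;> simp [h]
      rw [this]
      exact Finset.card_filter_add_card_filter_not _
    -- induction hypotheses
    have ih0 : (quadE A0 A0 A0 A0 : ℝ) ≤ (A0.card : ℝ) ^ p := by
      apply ih A0 (fun v hv i => hA v (hA0sub hv) i)
      intro v hv w hw j' hj'
      by_cases hjj : j' = j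
      · subst hjj
        have h1 := (Finset.mem_filter.mp hv).2
        have h2 := (Finset.mem_filter.mp hw).2
        rw [hφv] at h1 h2
        rw [h1, h2]
      · exact hagree v (hA0sub hv) w (hA0sub hw) j' (by simp [hjj, hj'])
    have ih1 : (quadE A1 A1 A1 A1 : ℝ) ≤ (A1.card : ℝ) ^ p := by
      apply ih A1 (fun v hv i => hA v (hA1sub hv) i)
      intro v hv w hw j' hj'
      by_cases hjj : j' = j
      · subst hjj
        have h1 := (Finset.mem_filter.mp hv).2
        have h2 := (Finset.mem_filter.mp hw).2
        rw [hφv] at h1 h2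
        rw [h1, h2]
      · exact hagree v (hA1sub hv) w (hA1sub hw) j' (by simp [hjj, hj'])
    -- decomposition
    have hdec := quadE_decomp A φ hAv
    rw [← hA0, ← hA1] at hdec
    -- Cauchy-Schwarz
    have hcs : (quadE A0 A1 A0 A1 : ℝ)
        ≤ ((A0.card:ℝ) * A1.card) ^ (p/2) := by
      have h1 : ((quadE A0 A1 A0 A1 : ℝ))^2 ≤ (quadE A0 A0 A0 A0 : ℝ) * quadE A1 A1 A1 A1 := by
        exact_mod_cast quadE_sq_le A0 A1
      have h2 : (quadE A0 A0 A0 A0 : ℝ) * quadE A1 A1 A1 A1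
          ≤ (A0.card:ℝ)^p * (A1.card:ℝ)^p := by
        apply mul_le_mul ih0 ih1 (by positivity) (by positivity)
      have h3 : ((quadE A0 A1 A0 A1 : ℝ))^2 ≤ ((A0.card:ℝ) * A1.card)^p := by
        rw [Real.mul_rpow (by positivity) (by positivity)]
        exact h1.trans h2
      have h4 : (quadE A0 A1 A0 A1 : ℝ) = Real.sqrt (((quadE A0 A1 A0 A1 : ℝ))^2) := by
        rw [Real.sqrt_sq (by positivity)]
      rw [h4]
      calc Real.sqrt (((quadE A0 A1 A0 A1 : ℝ))^2)
          ≤ Real.sqrt (((A0.card:ℝ) * A1.card)^p) := Real.sqrt_le_sqrt h3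
        _ = ((A0.card:ℝ) * A1.card) ^ (p/2) := by
            rw [Real.sqrt_eq_rpow, ← Real.rpow_mul (x := (A0.card:ℝ) * A1.card) (mul_nonneg (Nat.cast_nonneg _) (Nat.cast_nonneg _))]
            congr 1; ring
    -- put together
    have hmain : (quadE A A A A : ℝ)
        ≤ (A0.card:ℝ)^p + (A1.card:ℝ)^p + 4 * ((A0.card:ℝ) * A1.card)^(p/2) := by
      have : (quadE A A A A : ℝ) ≤ (quadE A0 A0 A0 A0 : ℝ) + quadE A1 A1 A1 A1
          + 4 * quadE A0 A1 A0 A1 := by exact_mod_cast hdec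
      refine this.trans ?_
      gcongr
    have hkt := ktMain hp2 (x := (A0.card:ℝ)) (y := (A1.card:ℝ)) (by positivity) (by positivity)
    rw [h26] at hkt
    have : ((A0.card:ℝ) + A1.card) = (A.card : ℝ) := by exact_mod_cast congrArg (Nat.cast (R := ℝ)) hcards
    rw [this] at hkt
    refine hmain.trans ?_
    calc (A0.card:ℝ)^p + (A1.card:ℝ)^p + 4 * ((A0.card:ℝ) * A1.card)^(p/2)
        = (A0.card:ℝ)^p + (A1.card:ℝ)^p + (6 - 2) * ((A0.card:ℝ) * A1.card)^(p/2) := by norm_num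
      _ ≤ (A.card : ℝ) ^ p := hkt

theorem kane_tao (d : ℕ) (A : Finset (Fin d → ℤ))
    (hA : ∀ v ∈ A, ∀ i, v i = 0 ∨ v i = 1) :
    ((((A ×ˢ A) ×ˢ (A ×ˢ A)).filter
        (fun p => p.1.1 + p.1.2 = p.2.1 + p.2.2)).card : ℝ)
      ≤ (A.card : ℝ) ^ (Real.logb 2 6) := by
  have := kt_induction (Finset.univ : Finset (Fin d)) A hA
    (fun v _ w _ j hj => absurd (Finset.mem_univ j) hj)
  exact this
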